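/- Let D_τ^{(1)}(λ) be the matrix obtained from D_τ(λ) by replacing its 0-th column by the vector w(λ) ∈ ℂ^{ℤ/pℤ} with entries w(λ)_k = ((q^{2k}λ² + q^{−2k}λ^{−2})² − (q + q^{−1})²). If τ(1/λ) = τ(λ) for all λ ∈ ℂ∖{0}, then det D_τ^{(1)}(1/λ) = det D_τ^{(1)}(λ) for every λ ∈ ℂ∖{0}. -/

import Mathlib

/-- The `p×p` matrix `D_τ(λ)`, indexed by `ℤ/pℤ`, with entries
`(D_τ(λ))_{k,k} = τ(q^k λ)`, `(D_τ(λ))_{k,k−1} = −a(q^k λ)`,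
`(D_τ(λ))_{k,k+1} = −a(1/(q^k λ))`, all other entries zero. -/
noncomputable def Dmat (p : ℕ) (q : ℂ) (tau a : ℂ → ℂ) (lam : ℂ) :
    Matrix (ZMod p) (ZMod p) ℂ :=
  Matrix.of fun k l : ZMod p =>
    if l = k then tau (q ^ k.val * lam)
    else if l = k - 1 then -a (q ^ k.val * lam)
    else if l = k + 1 then -a ((q ^ k.val * lam)⁻¹)
    else 0

/-- The matrix `D_τ^{(1)}(λ)`: `D_τ(λ)` with its `0`-th column replaced by the vector
`w(λ)_k = ((q^{2k} λ² + q^{−2k} λ^{−2})² − (q + q⁻¹)²)`. -/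
noncomputable def Dmat1 (p : ℕ) (q : ℂ) (tau a : ℂ → ℂ) (lam : ℂ) :
    Matrix (ZMod p) (ZMod p) ℂ :=
  (Dmat p q tau a lam).updateCol 0 (fun k : ZMod p =>
    (q ^ (2 * k.val) * lam ^ 2 + (q ^ (2 * k.val) * lam ^ 2)⁻¹) ^ 2 - (q + q⁻¹) ^ 2)

/-- If `τ(1/λ) = τ(λ)` for all nonzero `λ`, then
`det D_τ^{(1)}(1/λ) = det D_τ^{(1)}(λ)` for every nonzero `λ`. -/
theorem stmt_5 (p : ℕ) [NeZero p] (hodd : Odd p) (hp3 : 3 ≤ p)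
    (q : ℂ) (hq : IsPrimitiveRoot q p)
    (tau a : ℂ → ℂ)
    (htau_inv : ∀ lam : ℂ, lam ≠ 0 → tau lam⁻¹ = tau lam) :
    ∀ lam : ℂ, lam ≠ 0 →
      (Dmat1 p q tau a lam⁻¹).det = (Dmat1 p q tau a lam).det := by
  intro lam hlam
  have hq0 : q ≠ 0 := hq.ne_zero (NeZero.ne p)
  have hneg : ∀ k : ZMod p, q ^ (-k).val = (q ^ k.val)⁻¹ := by
    intro k
    have hdvd : p ∣ (-k).val + k.val := by
      have hc : (((-k).val + k.val : ℕ) : ZMod p) = 0 := by push_cast; simp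
      exact (ZMod.natCast_eq_zero_iff _ _).mp hc
    have h1 : q ^ ((-k).val + k.val) = 1 := (hq.pow_eq_one_iff_dvd _).mpr hdvd
    rw [pow_add] at h1
    exact eq_inv_of_mul_eq_one_left h1
  have hpow0 : ∀ k : ZMod p, q ^ k.val ≠ 0 := fun k => pow_ne_zero _ hq0
  have h2 : (2 : ZMod p) ≠ 0 := by
    intro h
    have : p ∣ 2 := by
      have : ((2 : ℕ) : ZMod p) = 0 := by exact_mod_cast h
      exact (ZMod.natCast_eq_zero_iff _ _).mp this
    exact absurd (Nat.le_of_dvd (by norm_num) this) (by omega)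
  have key : Dmat1 p q tau a lam⁻¹ =
      (Dmat1 p q tau a lam).submatrix (Equiv.neg (ZMod p)) (Equiv.neg (ZMod p)) := by
    ext k l
    simp only [Dmat1, Dmat, Matrix.submatrix_apply, Matrix.updateCol_apply,
      Matrix.of_apply, Equiv.neg_apply, neg_eq_zero]
    by_cases hl0 : l = 0
    · simp only [hl0, if_pos rfl]
      have hx : q ^ (2 * k.val) = (q ^ k.val) ^ 2 := by rw [pow_mul']
      have hx' : q ^ (2 * (-k).val) = ((q ^ k.val)⁻¹) ^ 2 := by rw [pow_mul', hneg]
      set X := q ^ k.val with hX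
      have hX0 : X ≠ 0 := hpow0 k
      rw [hx, hx']
      have hinv : X ^ 2 * (lam⁻¹) ^ 2 = (X⁻¹ ^ 2 * lam ^ 2)⁻¹ := by
        field_simp
      rw [hinv, inv_inv, add_comm ((X⁻¹ ^ 2 * lam ^ 2)⁻¹)]
      simp
    · rw [if_neg hl0, if_neg hl0]
      have hnk : (-l = -k) ↔ (l = k) := neg_inj
      have hnk1 : (-l = -k - 1) ↔ (l = k + 1) := by constructor <;> intro h <;> linear_combination -h
      have hnk2 : (-l = -k + 1) ↔ (l = k - 1) := by constructor <;> intro h <;> linear_combination -h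
      by_cases hlk : l = k
      · rw [if_pos hlk, if_pos (hnk.mpr hlk)]
        have : q ^ (-k).val * lam = (q ^ k.val * lam⁻¹)⁻¹ := by
          rw [hneg, mul_inv, inv_inv]
        rw [this, htau_inv _ (mul_ne_zero (hpow0 k) (inv_ne_zero hlam))]
      · rw [if_neg hlk, if_neg (fun h => hlk (hnk.mp h))]
        by_cases hlk1 : l = k - 1
        · have hne : ¬ (-l = -k - 1) := by
            rw [hnk1]; intro h; apply h2
            have := hlk1.symm.trans h
            linear_combination -this
          rw [if_pos hlk1, if_neg hne, if_pos (hnk2.mpr hlk1)]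
          rw [hneg, mul_inv, inv_inv]
        · rw [if_neg hlk1, if_neg (fun h => hlk1 (hnk2.mp h))]
          by_cases hlk2 : l = k + 1
          · rw [if_pos hlk2, if_pos (hnk1.mpr hlk2)]
            rw [hneg, mul_inv, inv_inv]
          · rw [if_neg hlk2, if_neg (fun h => hlk2 (hnk1.mp h))]
  rw [key, Matrix.det_submatrix_equiv_self]
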